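/- arXiv:2205.02990 — 4 statements merged into one kernel-verified Lean document; each statement's English description precedes it below -/
import Mathlib

section
/- Let A be an (m+n)×(m+n) real matrix in 2×2 block form A = [[A₁₁, A₁₂],[A₂₁, A₂₂]] with A₁₁ of size m×m and A₂₂ of size n×n. Let U_α, V_α be m×k matrices and U_β, V_β be n×k matrices, all with orthonormal columns, and suppose A₁₂ = U_α X V_βᵀ and A₂₁ = U_β W V_αᵀ for some k×k matrices X and W. Define the block-diagonal matrices U = [[U_α, 0],[0, U_β]] and V = [[V_α, 0],[0, V_β]] and the discrepancy matrix D = A − U (Uᵀ A V) Vᵀ. Then D is block diagonal: its off-diagonal blocks vanish, and its diagonal blocks are D_α = A₁₁ − U_α U_αᵀ A₁₁ V_α V_αᵀ and D_β = A₂₂ − U_β U_βᵀ A₂₂ V_β V_βᵀ; that is, D = [[D_α, 0],[0, D_β]]. -/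
open Matrix

theorem stmt_1 (m n k : ℕ)
    (A₁₁ : Matrix (Fin m) (Fin m) ℝ) (A₁₂ : Matrix (Fin m) (Fin n) ℝ)
    (A₂₁ : Matrix (Fin n) (Fin m) ℝ) (A₂₂ : Matrix (Fin n) (Fin n) ℝ)
    (Uα Vα : Matrix (Fin m) (Fin k) ℝ) (Uβ Vβ : Matrix (Fin n) (Fin k) ℝ)
    (hUα : Uαᵀ * Uα = 1) (hVα : Vαᵀ * Vα = 1)
    (hUβ : Uβᵀ * Uβ = 1) (hVβ : Vβᵀ * Vβ = 1)
    (X W : Matrix (Fin k) (Fin k) ℝ)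
    (h12 : A₁₂ = Uα * X * Vβᵀ) (h21 : A₂₁ = Uβ * W * Vαᵀ)
    (A : Matrix (Fin m ⊕ Fin n) (Fin m ⊕ Fin n) ℝ)
    (hA : A = Matrix.fromBlocks A₁₁ A₁₂ A₂₁ A₂₂)
    (U V : Matrix (Fin m ⊕ Fin n) (Fin k ⊕ Fin k) ℝ)
    (hU : U = Matrix.fromBlocks Uα 0 0 Uβ)
    (hV : V = Matrix.fromBlocks Vα 0 0 Vβ)
    (D : Matrix (Fin m ⊕ Fin n) (Fin m ⊕ Fin n) ℝ)
    (hD : D = A - U * (Uᵀ * A * V) * Vᵀ) :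
    D = Matrix.fromBlocks
      (A₁₁ - Uα * Uαᵀ * A₁₁ * Vα * Vαᵀ) 0
      0 (A₂₂ - Uβ * Uβᵀ * A₂₂ * Vβ * Vβᵀ) := by
  subst hD hA hU hV h12 h21
  simp only [Matrix.fromBlocks_transpose, Matrix.fromBlocks_multiply, Matrix.transpose_zero,
    Matrix.zero_mul, Matrix.mul_zero, add_zero, zero_add]
  have h1 : Uα * (Uαᵀ * (Uα * X * Vβᵀ) * Vβ) * Vβᵀ = Uα * X * Vβᵀ := by
    simp only [Matrix.mul_assoc]
    rw [← Matrix.mul_assoc Vβᵀ Vβ, hVβ, Matrix.one_mul,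
      ← Matrix.mul_assoc Uαᵀ Uα, hUα, Matrix.one_mul]
  have h2 : Uβ * (Uβᵀ * (Uβ * W * Vαᵀ) * Vα) * Vαᵀ = Uβ * W * Vαᵀ := by
    simp only [Matrix.mul_assoc]
    rw [← Matrix.mul_assoc Vαᵀ Vα, hVα, Matrix.one_mul,
      ← Matrix.mul_assoc Uβᵀ Uβ, hUβ, Matrix.one_mul]
  rw [h1, h2]
  ext (i|i) (j|j) <;>
    simp [Matrix.fromBlocks, Matrix.sub_apply, Matrix.mul_assoc]
end

section
/- Let A be an (m+n)×(m+n) real matrix in 2×2 block form A = [[A₁₁, A₁₂],[A₂₁, A₂₂]] with A₁₁ of size m×m and A₂₂ of size n×n. Let U be an m×k real matrix with orthonormal columns (UᵀU = I_k) such that A₁₂ = U Uᵀ A₁₂ (every column of A₁₂ lies in the range of U). Let Ω be an (m+n)×s real matrix with top block Ω₁ (its first m rows), and set Y = A Ω with top block Y₁ (its first m rows). Then (I_m − U Uᵀ) Y₁ = (I_m − U Uᵀ) A₁₁ Ω₁. -/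
open Matrix

theorem stmt_3 (m n s k : ℕ)
    (A₁₁ : Matrix (Fin m) (Fin m) ℝ) (A₁₂ : Matrix (Fin m) (Fin n) ℝ)
    (A₂₁ : Matrix (Fin n) (Fin m) ℝ) (A₂₂ : Matrix (Fin n) (Fin n) ℝ)
    (A : Matrix (Fin m ⊕ Fin n) (Fin m ⊕ Fin n) ℝ)
    (hA : A = Matrix.fromBlocks A₁₁ A₁₂ A₂₁ A₂₂)
    (U : Matrix (Fin m) (Fin k) ℝ)
    (hU : Uᵀ * U = 1)
    (hA₁₂ : A₁₂ = U * Uᵀ * A₁₂)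
    (Ω : Matrix (Fin m ⊕ Fin n) (Fin s) ℝ)
    (Y : Matrix (Fin m ⊕ Fin n) (Fin s) ℝ)
    (hY : Y = A * Ω) :
    (1 - U * Uᵀ) * Y.submatrix Sum.inl id
      = (1 - U * Uᵀ) * A₁₁ * Ω.submatrix Sum.inl id := by
  have hY1 : Y.submatrix Sum.inl id
      = A₁₁ * Ω.submatrix Sum.inl id + A₁₂ * Ω.submatrix Sum.inr id := by
    subst hA hY
    ext i j
    simp [Matrix.mul_apply, Matrix.fromBlocks, Fintype.sum_sum_type]
  have hz : (1 - U * Uᵀ) * A₁₂ = 0 := by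
    rw [hA₁₂]
    rw [Matrix.sub_mul, Matrix.one_mul]
    rw [show U * Uᵀ * (U * Uᵀ * A₁₂) = U * (Uᵀ * U) * (Uᵀ * A₁₂) by
      simp only [Matrix.mul_assoc]]
    rw [hU, Matrix.mul_one, Matrix.mul_assoc]
    abel
  rw [hY1, Matrix.mul_add, Matrix.mul_assoc, ← Matrix.mul_assoc _ A₁₂, hz, Matrix.zero_mul,
    add_zero, ← Matrix.mul_assoc]
end

section
/- Let A be an m×m real matrix, let U and V be m×k real matrices with orthonormal columns (UᵀU = I_k, VᵀV = I_k), and let Ω and Ψ be m×s real matrices such that Ω Ωᵀ and Ψ Ψᵀ are invertible. Suppose the m×s matrices Y and Z satisfy (I − U Uᵀ) Y = (I − U Uᵀ) A Ω and (I − V Vᵀ) Z = (I − V Vᵀ) Aᵀ Ψ. Then the discrepancy matrix D = A − U Uᵀ A V Vᵀ is given exactly by the formula D = (I − U Uᵀ) Y Ωᵀ (Ω Ωᵀ)⁻¹ + U Uᵀ ( (I − V Vᵀ) Z Ψᵀ (Ψ Ψᵀ)⁻¹ )ᵀ. -/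
open Matrix

theorem stmt_5 (m k s : ℕ)
    (A : Matrix (Fin m) (Fin m) ℝ)
    (U V : Matrix (Fin m) (Fin k) ℝ)
    (hU : Uᵀ * U = 1) (hV : Vᵀ * V = 1)
    (Ω Ψ : Matrix (Fin m) (Fin s) ℝ)
    (hΩ : IsUnit (Ω * Ωᵀ)) (hΨ : IsUnit (Ψ * Ψᵀ))
    (Y Z : Matrix (Fin m) (Fin s) ℝ)
    (hY : (1 - U * Uᵀ) * Y = (1 - U * Uᵀ) * A * Ω)
    (hZ : (1 - V * Vᵀ) * Z = (1 - V * Vᵀ) * Aᵀ * Ψ) :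
    A - U * Uᵀ * A * V * Vᵀ
      = (1 - U * Uᵀ) * Y * Ωᵀ * (Ω * Ωᵀ)⁻¹
        + U * Uᵀ * ((1 - V * Vᵀ) * Z * Ψᵀ * (Ψ * Ψᵀ)⁻¹)ᵀ := by
  have hΩd : IsUnit (Ω * Ωᵀ).det := (Matrix.isUnit_iff_isUnit_det _).mp hΩ
  have hΨd : IsUnit (Ψ * Ψᵀ).det := (Matrix.isUnit_iff_isUnit_det _).mp hΨ
  have h1 : (1 - U * Uᵀ) * Y * Ωᵀ * (Ω * Ωᵀ)⁻¹ = (1 - U * Uᵀ) * A := by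
    rw [hY]; simp only [Matrix.mul_assoc]; rw [← Matrix.mul_assoc Ω Ωᵀ, Matrix.mul_nonsing_inv _ hΩd, Matrix.mul_one]
  have h2 : (1 - V * Vᵀ) * Z * Ψᵀ * (Ψ * Ψᵀ)⁻¹ = (1 - V * Vᵀ) * Aᵀ := by
    rw [hZ]; simp only [Matrix.mul_assoc]; rw [← Matrix.mul_assoc Ψ Ψᵀ, Matrix.mul_nonsing_inv _ hΨd, Matrix.mul_one]
  rw [h1, h2]
  simp only [Matrix.transpose_mul, Matrix.transpose_sub, Matrix.transpose_one,
    Matrix.transpose_transpose]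
  noncomm_ring
  simp only [Matrix.mul_assoc]
end

section
/- Let A be an (m+n)×(m+n) real matrix in 2×2 block form A = [[A₁₁, A₁₂],[A₂₁, A₂₂]] with A₁₁ of size m×m and A₂₂ of size n×n. Let Ω be an (m+n)×s real matrix with top block Ω₁ (its first m rows) and bottom block Ω₂ (its last n rows), and let P be an s×r real matrix with Ω₁ P = 0. Set Y = A Ω and let Y₁ denote the first m rows of Y. Suppose rank(A₁₂ Ω₂ P) = rank(A₁₂), and let Q be an m×k real matrix with orthonormal columns (QᵀQ = I_k) whose column space equals the column space of Y₁ P. Then Q Qᵀ A₁₂ = A₁₂; that is, the basis matrix computed from the compressed sample Y₁P exactly captures the range of the off-diagonal block A₁₂. -/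
open Matrix

theorem stmt_9 (m n s r k : ℕ)
    (A₁₁ : Matrix (Fin m) (Fin m) ℝ) (A₁₂ : Matrix (Fin m) (Fin n) ℝ)
    (A₂₁ : Matrix (Fin n) (Fin m) ℝ) (A₂₂ : Matrix (Fin n) (Fin n) ℝ)
    (A : Matrix (Fin m ⊕ Fin n) (Fin m ⊕ Fin n) ℝ)
    (hA : A = Matrix.fromBlocks A₁₁ A₁₂ A₂₁ A₂₂)
    (Ω : Matrix (Fin m ⊕ Fin n) (Fin s) ℝ)
    (P : Matrix (Fin s) (Fin r) ℝ)
    (hP : Ω.submatrix Sum.inl id * P = 0)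
    (Y : Matrix (Fin m ⊕ Fin n) (Fin s) ℝ)
    (hY : Y = A * Ω)
    (hrank : (A₁₂ * (Ω.submatrix Sum.inr id * P)).rank = A₁₂.rank)
    (Q : Matrix (Fin m) (Fin k) ℝ)
    (hQ : Qᵀ * Q = 1)
    (hrange : LinearMap.range Q.mulVecLin
      = LinearMap.range (Y.submatrix Sum.inl id * P).mulVecLin) :
    Q * Qᵀ * A₁₂ = A₁₂ := by
  have h1 : (A * Ω).submatrix Sum.inl id
      = A₁₁ * Ω.submatrix Sum.inl id + A₁₂ * Ω.submatrix Sum.inr id := by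
    subst hA
    ext i j
    simp [mul_apply, Fintype.sum_sum_type]
  have hY1 : Y.submatrix Sum.inl id * P = A₁₂ * (Ω.submatrix Sum.inr id * P) := by
    rw [hY, h1, Matrix.add_mul, Matrix.mul_assoc, hP, Matrix.mul_zero, zero_add, Matrix.mul_assoc]
  have hle : LinearMap.range (A₁₂ * (Ω.submatrix Sum.inr id * P)).mulVecLin
      ≤ LinearMap.range A₁₂.mulVecLin := by
    rw [Matrix.mulVecLin_mul]
    exact LinearMap.range_comp_le_range _ _
  have heq : LinearMap.range (A₁₂ * (Ω.submatrix Sum.inr id * P)).mulVecLin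
      = LinearMap.range A₁₂.mulVecLin :=
    Submodule.eq_of_le_of_finrank_eq hle hrank
  have hrQ : LinearMap.range Q.mulVecLin = LinearMap.range A₁₂.mulVecLin := by
    rw [hrange, hY1, heq]
  have key : ∀ x, (Q * Qᵀ * A₁₂) *ᵥ x = A₁₂ *ᵥ x := by
    intro x
    have hx : A₁₂ *ᵥ x ∈ LinearMap.range Q.mulVecLin := by
      rw [hrQ]; exact ⟨x, rfl⟩
    obtain ⟨y, hy⟩ := hx
    have hy' : Q *ᵥ y = A₁₂ *ᵥ x := hy
    calc (Q * Qᵀ * A₁₂) *ᵥ x = (Q * Qᵀ) *ᵥ (A₁₂ *ᵥ x) := by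
          rw [mulVec_mulVec]
      _ = (Q * Qᵀ) *ᵥ (Q *ᵥ y) := by rw [hy']
      _ = (Q * Qᵀ * Q) *ᵥ y := by rw [mulVec_mulVec]
      _ = Q *ᵥ y := by rw [Matrix.mul_assoc, hQ, Matrix.mul_one]
      _ = A₁₂ *ᵥ x := hy'
  ext i j
  have := congr_fun (key (Pi.single j 1)) i
  simpa [mulVec_single_one] using this
end
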